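/- Let S and A be finite types and consider two Markov decision processes on S and A with a common initial distribution ρ₀, transition kernels T¹, T² : S × A → PMF(S), and policies π¹, π² : S → PMF(A). Let ε_T, ε_π, ε_S, C_T, C_π ≥ 0 and suppose D_TV(T¹(s,a), T²(s,a)) ≤ ε_T + C_T · ε_S for all s, a, and D_TV(π¹(s), π²(s)) ≤ ε_π + (1/2) · C_π · ε_S for all s. Let r : S × A → ℝ satisfy |r(s,a)| ≤ R for all s, a, let γ ∈ [0,1), and let G¹(π¹) and G²(π²) denote the discounted returns of π¹ under T¹ and of π² under T², respectively. Then |G¹(π¹) − G²(π²)| ≤ Rγ[2ε_π + 2ε_T + (C_π + 2C_T)ε_S]/(1 − γ)² + R(2ε_π + C_π ε_S)/(1 − γ). -/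

import Mathlib

set_option maxHeartbeats 1000000

open scoped BigOperators

/-- Total variation distance between two PMFs on a finite type. -/
noncomputable def tv {X : Type*} [Fintype X] (p q : PMF X) : ℝ :=
  (1 / 2) * ∑ x, |(p x).toReal - (q x).toReal|

lemma sum_pmf_toReal {X : Type*} [Fintype X] (p : PMF X) : ∑ x, (p x).toReal = 1 := by
  have h := p.tsum_coe
  rw [tsum_fintype] at h
  rw [← ENNReal.toReal_sum (fun x _ => p.apply_ne_top x), h]
  exact ENNReal.toReal_one

lemma sum_abs_eq_two_tv {X : Type*} [Fintype X] (p q : PMF X) :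
    ∑ x, |(p x).toReal - (q x).toReal| = 2 * tv p q := by
  rw [tv]; ring

lemma tv_self {X : Type*} [Fintype X] (p : PMF X) : tv p p = 0 := by
  simp [tv]

lemma tv_nonneg {X : Type*} [Fintype X] (p q : PMF X) : 0 ≤ tv p q := by
  unfold tv
  positivity

lemma abs_mul_sub_mul (m₁ m₂ x y : ℝ) (hx : 0 ≤ x) (hm : 0 ≤ m₂) :
    |m₁ * x - m₂ * y| ≤ |m₁ - m₂| * x + m₂ * |x - y| := by
  have h : m₁ * x - m₂ * y = (m₁ - m₂) * x + m₂ * (x - y) := by ring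
  rw [h]
  refine (abs_add_le _ _).trans ?_
  rw [abs_mul, abs_mul, abs_of_nonneg hx, abs_of_nonneg hm]

/-- For two MDPs with a common initial distribution whose kernels are
`(ε_T + C_T·ε_S)`-close and whose policies are `(ε_π + (1/2)·C_π·ε_S)`-close in total
variation, with reward bounded by `R` and discount `γ ∈ [0,1)`, the discounted returns
satisfy `|G¹(π¹) − G²(π²)| ≤ Rγ[2ε_π + 2ε_T + (C_π + 2C_T)ε_S]/(1−γ)²
  + R(2ε_π + C_π ε_S)/(1−γ)`. -/
theorem return_gap_with_representation_error {S A : Type*} [Fintype S] [Fintype A]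
    (ρ₀ : PMF S) (T₁ T₂ : S × A → PMF S) (π₁ π₂ : S → PMF A)
    (εT επ εS CT Cπ : ℝ)
    (hεT : 0 ≤ εT) (hεπ : 0 ≤ επ) (hεS : 0 ≤ εS) (hCT : 0 ≤ CT) (hCπ : 0 ≤ Cπ)
    (hT : ∀ s a, tv (T₁ (s, a)) (T₂ (s, a)) ≤ εT + CT * εS)
    (hπ : ∀ s, tv (π₁ s) (π₂ s) ≤ επ + (1 / 2) * Cπ * εS)
    (μ₁ μ₂ : ℕ → PMF S)
    (hμ₁0 : μ₁ 0 = ρ₀) (hμ₂0 : μ₂ 0 = ρ₀)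
    (hμ₁ : ∀ t s', μ₁ (t + 1) s' = ∑ s, ∑ a, μ₁ t s * π₁ s a * T₁ (s, a) s')
    (hμ₂ : ∀ t s', μ₂ (t + 1) s' = ∑ s, ∑ a, μ₂ t s * π₂ s a * T₂ (s, a) s')
    (p₁ p₂ : ℕ → PMF (S × A))
    (hp₁ : ∀ t s a, p₁ t (s, a) = μ₁ t s * π₁ s a)
    (hp₂ : ∀ t s a, p₂ t (s, a) = μ₂ t s * π₂ s a)
    (r : S × A → ℝ) (R : ℝ) (hr : ∀ s a, |r (s, a)| ≤ R)
    (γ : ℝ) (hγ0 : 0 ≤ γ) (hγ1 : γ < 1)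
    (G₁ G₂ : ℝ)
    (hG₁ : G₁ = ∑' t : ℕ, γ ^ t * ∑ sa : S × A, (p₁ t sa).toReal * r sa)
    (hG₂ : G₂ = ∑' t : ℕ, γ ^ t * ∑ sa : S × A, (p₂ t sa).toReal * r sa) :
    |G₁ - G₂| ≤
      R * γ * (2 * επ + 2 * εT + (Cπ + 2 * CT) * εS) / (1 - γ) ^ 2 +
        R * (2 * επ + Cπ * εS) / (1 - γ) := by
  have hSne : Nonempty S := ⟨(ρ₀.support_nonempty).choose⟩
  have hAne : Nonempty A := ⟨((π₁ (Classical.arbitrary S)).support_nonempty).choose⟩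
  have hR : 0 ≤ R :=
    le_trans (abs_nonneg _) (hr (Classical.arbitrary S) (Classical.arbitrary A))
  set δπ : ℝ := επ + (1 / 2) * Cπ * εS with hδπ
  set δT : ℝ := εT + CT * εS with hδT
  have hδπ0 : 0 ≤ δπ := by positivity
  have hδT0 : 0 ≤ δT := by positivity
  -- Step 1: tv (p₁ t) (p₂ t) ≤ tv (μ₁ t) (μ₂ t) + δπ
  have step1 : ∀ t, tv (p₁ t) (p₂ t) ≤ tv (μ₁ t) (μ₂ t) + δπ := by
    intro t
    have hsum : ∑ sa : S × A, |(p₁ t sa).toReal - (p₂ t sa).toReal| ≤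
        2 * tv (μ₁ t) (μ₂ t) + 2 * δπ := by
      rw [Fintype.sum_prod_type]
      have hb : ∀ s, ∑ a, |(p₁ t (s, a)).toReal - (p₂ t (s, a)).toReal| ≤
          |(μ₁ t s).toReal - (μ₂ t s).toReal| + (μ₂ t s).toReal * (2 * δπ) := by
        intro s
        have hpt : ∀ a, |(p₁ t (s, a)).toReal - (p₂ t (s, a)).toReal| ≤
            |(μ₁ t s).toReal - (μ₂ t s).toReal| * (π₁ s a).toReal +
              (μ₂ t s).toReal * |(π₁ s a).toReal - (π₂ s a).toReal| := by
          intro a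
          rw [hp₁, hp₂, ENNReal.toReal_mul, ENNReal.toReal_mul]
          exact abs_mul_sub_mul _ _ _ _ ENNReal.toReal_nonneg ENNReal.toReal_nonneg
        calc ∑ a, |(p₁ t (s, a)).toReal - (p₂ t (s, a)).toReal|
            ≤ ∑ a, (|(μ₁ t s).toReal - (μ₂ t s).toReal| * (π₁ s a).toReal +
              (μ₂ t s).toReal * |(π₁ s a).toReal - (π₂ s a).toReal|) :=
              Finset.sum_le_sum fun a _ => hpt a
          _ = |(μ₁ t s).toReal - (μ₂ t s).toReal| * (∑ a, (π₁ s a).toReal) +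
              (μ₂ t s).toReal * (∑ a, |(π₁ s a).toReal - (π₂ s a).toReal|) := by
              rw [Finset.sum_add_distrib, Finset.mul_sum, Finset.mul_sum]
          _ = |(μ₁ t s).toReal - (μ₂ t s).toReal| +
              (μ₂ t s).toReal * (2 * tv (π₁ s) (π₂ s)) := by
              rw [sum_pmf_toReal, sum_abs_eq_two_tv, mul_one]
          _ ≤ |(μ₁ t s).toReal - (μ₂ t s).toReal| + (μ₂ t s).toReal * (2 * δπ) :=
              add_le_add_right (mul_le_mul_of_nonneg_left
                (by linarith [hπ s] : 2 * tv (π₁ s) (π₂ s) ≤ 2 * δπ)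
                ENNReal.toReal_nonneg) _
      calc ∑ s, ∑ a, |(p₁ t (s, a)).toReal - (p₂ t (s, a)).toReal|
          ≤ ∑ s, (|(μ₁ t s).toReal - (μ₂ t s).toReal| + (μ₂ t s).toReal * (2 * δπ)) :=
            Finset.sum_le_sum fun s _ => hb s
        _ = (∑ s, |(μ₁ t s).toReal - (μ₂ t s).toReal|) +
            (∑ s, (μ₂ t s).toReal) * (2 * δπ) := by
            rw [Finset.sum_add_distrib, Finset.sum_mul]
        _ = 2 * tv (μ₁ t) (μ₂ t) + 2 * δπ := by
            rw [sum_abs_eq_two_tv, sum_pmf_toReal, one_mul]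
    have h2 : 2 * tv (p₁ t) (p₂ t) ≤ 2 * tv (μ₁ t) (μ₂ t) + 2 * δπ := by
      rw [← sum_abs_eq_two_tv]; exact hsum
    linarith
  -- Step 2: tv (μ₁ (t+1)) (μ₂ (t+1)) ≤ tv (p₁ t) (p₂ t) + δT
  have step2 : ∀ t, tv (μ₁ (t + 1)) (μ₂ (t + 1)) ≤ tv (p₁ t) (p₂ t) + δT := by
    intro t
    have e1 : ∀ s', (μ₁ (t + 1) s').toReal =
        ∑ sa : S × A, (p₁ t sa).toReal * (T₁ sa s').toReal := by
      intro s'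
      rw [hμ₁, ENNReal.toReal_sum (fun s _ => ENNReal.sum_ne_top.2 fun a _ =>
        ENNReal.mul_ne_top (ENNReal.mul_ne_top ((μ₁ t).apply_ne_top s)
          ((π₁ s).apply_ne_top a)) ((T₁ (s, a)).apply_ne_top s'))]
      rw [Fintype.sum_prod_type]
      refine Finset.sum_congr rfl fun s _ => ?_
      rw [ENNReal.toReal_sum (fun a _ =>
        ENNReal.mul_ne_top (ENNReal.mul_ne_top ((μ₁ t).apply_ne_top s)
          ((π₁ s).apply_ne_top a)) ((T₁ (s, a)).apply_ne_top s'))]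
      refine Finset.sum_congr rfl fun a _ => ?_
      rw [hp₁, ENNReal.toReal_mul, ENNReal.toReal_mul]
    have e2 : ∀ s', (μ₂ (t + 1) s').toReal =
        ∑ sa : S × A, (p₂ t sa).toReal * (T₂ sa s').toReal := by
      intro s'
      rw [hμ₂, ENNReal.toReal_sum (fun s _ => ENNReal.sum_ne_top.2 fun a _ =>
        ENNReal.mul_ne_top (ENNReal.mul_ne_top ((μ₂ t).apply_ne_top s)
          ((π₂ s).apply_ne_top a)) ((T₂ (s, a)).apply_ne_top s'))]
      rw [Fintype.sum_prod_type]
      refine Finset.sum_congr rfl fun s _ => ?_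
      rw [ENNReal.toReal_sum (fun a _ =>
        ENNReal.mul_ne_top (ENNReal.mul_ne_top ((μ₂ t).apply_ne_top s)
          ((π₂ s).apply_ne_top a)) ((T₂ (s, a)).apply_ne_top s'))]
      refine Finset.sum_congr rfl fun a _ => ?_
      rw [hp₂, ENNReal.toReal_mul, ENNReal.toReal_mul]
    have hsum : ∑ s', |(μ₁ (t + 1) s').toReal - (μ₂ (t + 1) s').toReal| ≤
        2 * tv (p₁ t) (p₂ t) + 2 * δT := by
      calc ∑ s', |(μ₁ (t + 1) s').toReal - (μ₂ (t + 1) s').toReal|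
          = ∑ s', |∑ sa : S × A, ((p₁ t sa).toReal * (T₁ sa s').toReal -
              (p₂ t sa).toReal * (T₂ sa s').toReal)| := by
            refine Finset.sum_congr rfl fun s' _ => ?_
            rw [e1, e2, ← Finset.sum_sub_distrib]
        _ ≤ ∑ s', ∑ sa : S × A, |(p₁ t sa).toReal * (T₁ sa s').toReal -
              (p₂ t sa).toReal * (T₂ sa s').toReal| :=
            Finset.sum_le_sum fun s' _ => Finset.abs_sum_le_sum_abs _ _
        _ ≤ ∑ s', ∑ sa : S × A, (|(p₁ t sa).toReal - (p₂ t sa).toReal| * (T₁ sa s').toReal +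
              (p₂ t sa).toReal * |(T₁ sa s').toReal - (T₂ sa s').toReal|) :=
            Finset.sum_le_sum fun s' _ => Finset.sum_le_sum fun sa _ =>
              abs_mul_sub_mul _ _ _ _ ENNReal.toReal_nonneg ENNReal.toReal_nonneg
        _ = ∑ sa : S × A, ∑ s', (|(p₁ t sa).toReal - (p₂ t sa).toReal| * (T₁ sa s').toReal +
              (p₂ t sa).toReal * |(T₁ sa s').toReal - (T₂ sa s').toReal|) :=
            Finset.sum_comm
        _ = ∑ sa : S × A, (|(p₁ t sa).toReal - (p₂ t sa).toReal| +
              (p₂ t sa).toReal * (2 * tv (T₁ sa) (T₂ sa))) := by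
            refine Finset.sum_congr rfl fun sa _ => ?_
            rw [Finset.sum_add_distrib, ← Finset.mul_sum, ← Finset.mul_sum,
              sum_pmf_toReal, sum_abs_eq_two_tv, mul_one]
        _ ≤ ∑ sa : S × A, (|(p₁ t sa).toReal - (p₂ t sa).toReal| +
              (p₂ t sa).toReal * (2 * δT)) := by
            refine Finset.sum_le_sum fun sa _ => add_le_add_right
              (mul_le_mul_of_nonneg_left ?_ ENNReal.toReal_nonneg) _
            obtain ⟨s, a⟩ := sa
            linarith [hT s a]
        _ = 2 * tv (p₁ t) (p₂ t) + 2 * δT := by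
            rw [Finset.sum_add_distrib, ← Finset.sum_mul, sum_abs_eq_two_tv,
              sum_pmf_toReal, one_mul]
    have h2 : 2 * tv (μ₁ (t + 1)) (μ₂ (t + 1)) ≤ 2 * tv (p₁ t) (p₂ t) + 2 * δT := by
      rw [← sum_abs_eq_two_tv]; exact hsum
    linarith
  -- Step 3: induction
  have step3 : ∀ t : ℕ, tv (μ₁ t) (μ₂ t) ≤ t * (δπ + δT) := by
    intro t
    induction t with
    | zero => simp [hμ₁0, hμ₂0, tv_self]
    | succ n ih =>
      calc tv (μ₁ (n + 1)) (μ₂ (n + 1)) ≤ tv (p₁ n) (p₂ n) + δT := step2 n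
        _ ≤ (tv (μ₁ n) (μ₂ n) + δπ) + δT := by linarith [step1 n]
        _ ≤ (n * (δπ + δT) + δπ) + δT := by linarith [ih]
        _ = (n + 1 : ℕ) * (δπ + δT) := by push_cast; ring
  have step4 : ∀ t : ℕ, tv (p₁ t) (p₂ t) ≤ t * (δπ + δT) + δπ := fun t =>
    (step1 t).trans (by linarith [step3 t])
  -- per-step reward gap
  set f₁ : ℕ → ℝ := fun t => ∑ sa : S × A, (p₁ t sa).toReal * r sa with hf₁
  set f₂ : ℕ → ℝ := fun t => ∑ sa : S × A, (p₂ t sa).toReal * r sa with hf₂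
  have hfd : ∀ t, |f₁ t - f₂ t| ≤ 2 * R * (t * (δπ + δT) + δπ) := by
    intro t
    have : |f₁ t - f₂ t| ≤ ∑ sa : S × A, |(p₁ t sa).toReal - (p₂ t sa).toReal| * R := by
      rw [hf₁, hf₂, ← Finset.sum_sub_distrib]
      refine (Finset.abs_sum_le_sum_abs _ _).trans (Finset.sum_le_sum fun sa _ => ?_)
      rw [← sub_mul, abs_mul]
      obtain ⟨s, a⟩ := sa
      exact mul_le_mul_of_nonneg_left (hr s a) (abs_nonneg _)
    calc |f₁ t - f₂ t| ≤ ∑ sa : S × A, |(p₁ t sa).toReal - (p₂ t sa).toReal| * R := this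
      _ = 2 * tv (p₁ t) (p₂ t) * R := by rw [← Finset.sum_mul, sum_abs_eq_two_tv]
      _ ≤ 2 * (t * (δπ + δT) + δπ) * R := by
          have := step4 t
          nlinarith [tv_nonneg (p₁ t) (p₂ t)]
      _ = 2 * R * (t * (δπ + δT) + δπ) := by ring
  have hfb : ∀ t (p : ℕ → PMF (S × A)), |∑ sa : S × A, (p t sa).toReal * r sa| ≤ R := by
    intro t p
    calc |∑ sa : S × A, (p t sa).toReal * r sa|
        ≤ ∑ sa : S × A, (p t sa).toReal * R := by
          refine (Finset.abs_sum_le_sum_abs _ _).trans (Finset.sum_le_sum fun sa _ => ?_)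
          rw [abs_mul, abs_of_nonneg ENNReal.toReal_nonneg]
          obtain ⟨s, a⟩ := sa
          exact mul_le_mul_of_nonneg_left (hr s a) ENNReal.toReal_nonneg
      _ = R := by rw [← Finset.sum_mul, sum_pmf_toReal, one_mul]
  have hγn : ‖γ‖ < 1 := by rw [Real.norm_eq_abs, abs_of_nonneg hγ0]; exact hγ1
  have hsg : Summable (fun t : ℕ => γ ^ t) := summable_geometric_of_norm_lt_one hγn
  have hsng : Summable (fun t : ℕ => (t : ℝ) * γ ^ t) := by
    have := summable_pow_mul_geometric_of_norm_lt_one 1 hγn (R := ℝ)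
    simpa using this
  have hs1 : Summable (fun t : ℕ => γ ^ t * f₁ t) := by
    refine Summable.of_norm_bounded (hsg.mul_left R) fun t => ?_
    rw [norm_mul, Real.norm_eq_abs, Real.norm_eq_abs, abs_of_nonneg (pow_nonneg hγ0 t)]
    calc γ ^ t * |f₁ t| ≤ γ ^ t * R :=
          mul_le_mul_of_nonneg_left (hfb t p₁) (pow_nonneg hγ0 t)
      _ = R * γ ^ t := by ring
  have hs2 : Summable (fun t : ℕ => γ ^ t * f₂ t) := by
    refine Summable.of_norm_bounded (hsg.mul_left R) fun t => ?_
    rw [norm_mul, Real.norm_eq_abs, Real.norm_eq_abs, abs_of_nonneg (pow_nonneg hγ0 t)]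
    calc γ ^ t * |f₂ t| ≤ γ ^ t * R :=
          mul_le_mul_of_nonneg_left (hfb t p₂) (pow_nonneg hγ0 t)
      _ = R * γ ^ t := by ring
  -- bounding series
  set g : ℕ → ℝ := fun t => 2 * R * (δπ + δT) * ((t : ℝ) * γ ^ t) + 2 * R * δπ * γ ^ t
    with hg
  have hsgg : Summable g := (hsng.mul_left _).add (hsg.mul_left _)
  have hgd : ∀ t, |γ ^ t * f₁ t - γ ^ t * f₂ t| ≤ g t := by
    intro t
    rw [← mul_sub, abs_mul, abs_of_nonneg (pow_nonneg hγ0 t)]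
    calc γ ^ t * |f₁ t - f₂ t| ≤ γ ^ t * (2 * R * (t * (δπ + δT) + δπ)) :=
          mul_le_mul_of_nonneg_left (hfd t) (pow_nonneg hγ0 t)
      _ = g t := by rw [hg]; ring
  have hsd : Summable (fun t : ℕ => |γ ^ t * f₁ t - γ ^ t * f₂ t|) :=
    Summable.of_nonneg_of_le (fun t => abs_nonneg _) hgd hsgg
  have hGsub : G₁ - G₂ = ∑' t : ℕ, (γ ^ t * f₁ t - γ ^ t * f₂ t) := by
    rw [hG₁, hG₂, ← Summable.tsum_sub hs1 hs2]
  have hmain : |G₁ - G₂| ≤ ∑' t, g t := by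
    rw [hGsub]
    calc |∑' t : ℕ, (γ ^ t * f₁ t - γ ^ t * f₂ t)|
        ≤ ∑' t : ℕ, |γ ^ t * f₁ t - γ ^ t * f₂ t| := by
          have hsd' : Summable (fun t : ℕ => ‖γ ^ t * f₁ t - γ ^ t * f₂ t‖) := by
            simpa [Real.norm_eq_abs] using hsd
          simpa [Real.norm_eq_abs] using norm_tsum_le_tsum_norm hsd'
      _ ≤ ∑' t, g t := Summable.tsum_le_tsum hgd hsd hsgg
  have hgsum : ∑' t, g t = 2 * R * (δπ + δT) * (γ / (1 - γ) ^ 2) +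
      2 * R * δπ * (1 - γ)⁻¹ := by
    rw [hg, Summable.tsum_add (hsng.mul_left _) (hsg.mul_left _), tsum_mul_left, tsum_mul_left,
      tsum_coe_mul_geometric_of_norm_lt_one hγn, tsum_geometric_of_lt_one hγ0 hγ1]
  have h1γ : (1 : ℝ) - γ ≠ 0 := by linarith
  have hfinal : 2 * R * (δπ + δT) * (γ / (1 - γ) ^ 2) + 2 * R * δπ * (1 - γ)⁻¹ =
      R * γ * (2 * επ + 2 * εT + (Cπ + 2 * CT) * εS) / (1 - γ) ^ 2 +
        R * (2 * επ + Cπ * εS) / (1 - γ) := by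
    rw [hδπ, hδT]
    field_simp
    ring
  linarith [hmain, hgsum.le, hgsum.ge, hfinal.le]
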